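/- Let J = [0,∞) and let f : J → ℝ be differentiable on the interior of J with f' integrable on [u,v], where u, v ∈ J and 0 < u < v. Let q > 1 and p satisfy 1/p + 1/q = 1. If |f'|^q is concave on [u,v], then for every x ∈ [u,v]: |((v-x)(v·f(v) - u·f(x)) + (x-u)(v·f(x) - u·f(u)))/(v-u)² - (1/(v-u))·∫_u^v f(μ) dμ| ≤ (L_p(u,v)/(v-u)²)·[(v-x)²·|f'((x+v)/2)| + (x-u)²·|f'((x+u)/2)|]. -/

import Mathlib

open MeasureTheory Set intervalIntegral

private lemma conc_bound {f' : ℝ → ℝ} {u v q : ℝ} (huv : u < v) (hq0 : 0 < q)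
    (hconc : ∀ a ∈ Set.Icc u v, ∀ b ∈ Set.Icc u v, ∀ t ∈ Set.Icc (0:ℝ) 1,
      t * |f' a| ^ q + (1 - t) * |f' b| ^ q ≤ |f' (t * a + (1 - t) * b)| ^ q) :
    ∀ t ∈ Set.Icc u v, |f' t| ^ q ≤ 2 * |f' ((u + v) / 2)| ^ q := by
  intro t ht
  obtain ⟨ht1, ht2⟩ := ht
  have hm0 : (u + v) / 2 ∈ Set.Icc u v := ⟨by linarith, by linarith⟩
  rcases le_or_gt t ((u + v) / 2) with hcase | hcase
  · -- t ≤ midpoint, use v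
    have hvt : 0 < v - t := by linarith
    set s := (v - (u + v) / 2) / (v - t) with hs
    have hs1 : 1 / 2 ≤ s := by
      rw [hs, le_div_iff₀ hvt]; linarith
    have hs2 : s ≤ 1 := by
      rw [hs, div_le_one hvt]; linarith
    have harg : s * t + (1 - s) * v = (u + v) / 2 := by
      rw [hs]; field_simp; ring
    have h := hconc t ⟨ht1, ht2⟩ v ⟨le_of_lt huv, le_rfl⟩ s ⟨by linarith, hs2⟩
    rw [harg] at h
    nlinarith [Real.rpow_nonneg (abs_nonneg (f' t)) q, Real.rpow_nonneg (abs_nonneg (f' v)) q]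
  · -- midpoint < t, use u
    have htu : 0 < t - u := by linarith
    set s := (t - (u + v) / 2) / (t - u) with hs
    have hs1 : 1 - s ≥ 1 / 2 := by
      rw [hs, ge_iff_le, le_sub_comm, div_le_iff₀ htu]; linarith
    have hs2 : 0 ≤ s := by
      apply div_nonneg <;> linarith
    have hs3 : s ≤ 1 := by
      rw [hs, div_le_one htu]; linarith
    have harg : s * u + (1 - s) * t = (u + v) / 2 := by
      rw [hs]; field_simp; ring
    have h := hconc u ⟨le_rfl, le_of_lt huv⟩ t ⟨ht1, ht2⟩ s ⟨hs2, hs3⟩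
    rw [harg] at h
    nlinarith [Real.rpow_nonneg (abs_nonneg (f' t)) q, Real.rpow_nonneg (abs_nonneg (f' u)) q]

private lemma key_bound (f' : ℝ → ℝ) (u v p q a b : ℝ) (hu : 0 < u) (huv : u < v)
    (hq : 1 < q) (hpq : 1 / p + 1 / q = 1)
    (hconc : ∀ a ∈ Set.Icc u v, ∀ b ∈ Set.Icc u v, ∀ t ∈ Set.Icc (0:ℝ) 1,
      t * |f' a| ^ q + (1 - t) * |f' b| ^ q ≤ |f' (t * a + (1 - t) * b)| ^ q)
    (hint : IntervalIntegrable f' MeasureTheory.volume u v)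
    (hua : u ≤ a) (hab : a ≤ b) (hbv : b ≤ v) :
    |∫ t in a..b, ((v - u) * t - (a * v - b * u)) * f' t|
      ≤ ((v ^ (p + 1) - u ^ (p + 1)) / ((p + 1) * (v - u))) ^ (1 / p) *
        ((b - a) ^ 2 * |f' ((a + b) / 2)|) := by
  -- basic exponent facts
  have hq0 : 0 < q := lt_trans one_pos hq
  have hiq : 0 < 1 / q := by positivity
  have hiq1 : 1 / q < 1 := by rw [div_lt_one hq0]; exact hq
  have hip : 0 < 1 / p := by linarith
  have hp0 : 0 < p := one_div_pos.mp hip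
  have hp1 : 1 < p := by
    have : 1 / p < 1 := by linarith
    rwa [div_lt_one hp0] at this
  have hpq' : Real.HolderConjugate p q := Real.holderConjugate_iff.mpr
    ⟨hp1, by rw [← one_div, ← one_div]; exact hpq⟩
  have hvu : (0:ℝ) < v - u := by linarith
  have hKnn : 0 ≤ (v ^ (p + 1) - u ^ (p + 1)) / ((p + 1) * (v - u)) := by
    apply div_nonneg _ (by positivity)
    have := Real.rpow_le_rpow hu.le (le_of_lt huv) (by linarith : (0:ℝ) ≤ p + 1)
    linarith
  rcases eq_or_lt_of_le hab with rfl | hab'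
  · simp
  have hba : (0:ℝ) < b - a := by linarith
  -- kernel facts
  have hm_nonneg : ∀ t ∈ Set.Icc a b, 0 ≤ (v - u) * t - (a * v - b * u) := by
    intro t ht; nlinarith [ht.1, ht.2]
  have hm_le : ∀ t ∈ Set.Icc a b, (v - u) * t - (a * v - b * u) ≤ v * (b - a) := by
    intro t ht; nlinarith [ht.1, ht.2]
  have hm_cont : Continuous (fun t : ℝ => (v - u) * t - (a * v - b * u)) := by continuity
  -- restricted measure, finite
  haveI hfin : IsFiniteMeasure (volume.restrict (Set.Ioc a b)) := by
    constructor
    rw [Measure.restrict_apply_univ]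
    simp [Real.volume_Ioc]
  -- measurability of f' on the subinterval
  have hf'aesm : AEStronglyMeasurable f' (volume.restrict (Set.Ioc a b)) := by
    have h1 : IntegrableOn f' (Set.Ioc u v) volume := hint.1
    exact h1.aestronglyMeasurable.mono_measure
      (Measure.restrict_mono (Set.Ioc_subset_Ioc hua hbv) le_rfl)
  have habs_aesm : AEStronglyMeasurable (fun t => |f' t|) (volume.restrict (Set.Ioc a b)) :=
    continuous_abs.comp_aestronglyMeasurable hf'aesm
  -- bound on |f'|
  set M : ℝ := |f' ((u + v) / 2)| with hM
  have hgb := conc_bound huv hq0 hconc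
  have habs_bound : ∀ t ∈ Set.Icc u v, |f' t| ≤ (2 * M ^ q) ^ (1 / q) := by
    intro t ht
    have h1 : |f' t| = (|f' t| ^ q) ^ (1 / q) := by
      rw [one_div, Real.rpow_rpow_inv (abs_nonneg _) (ne_of_gt hq0)]
    rw [h1]
    exact Real.rpow_le_rpow (Real.rpow_nonneg (abs_nonneg _) q) (hgb t ht) (le_of_lt hiq)
  have hIoc_sub : Set.Ioc a b ⊆ Set.Icc u v := fun t ht =>
    ⟨le_trans hua (le_of_lt ht.1), le_trans ht.2 hbv⟩
  -- Memℒp facts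
  have hmem_m : MemLp (fun t : ℝ => (v - u) * t - (a * v - b * u)) (ENNReal.ofReal p)
      (volume.restrict (Set.Ioc a b)) := by
    apply MemLp.of_bound hm_cont.aestronglyMeasurable (v * (b - a))
    filter_upwards [ae_restrict_mem measurableSet_Ioc] with t ht
    rw [Real.norm_eq_abs, abs_of_nonneg (hm_nonneg t (Set.Ioc_subset_Icc_self ht))]
    exact hm_le t (Set.Ioc_subset_Icc_self ht)
  have hmem_g : MemLp (fun t => |f' t|) (ENNReal.ofReal q)
      (volume.restrict (Set.Ioc a b)) := by
    apply MemLp.of_bound habs_aesm ((2 * M ^ q) ^ (1 / q))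
    filter_upwards [ae_restrict_mem measurableSet_Ioc] with t ht
    rw [Real.norm_eq_abs, abs_abs]
    exact habs_bound t (hIoc_sub ht)
  -- Hölder
  have hHolder := MeasureTheory.integral_mul_le_Lp_mul_Lq_of_nonneg hpq'
    (f := fun t : ℝ => (v - u) * t - (a * v - b * u)) (g := fun t => |f' t|)
    ?_ ?_ hmem_m hmem_g
  rotate_left
  · filter_upwards [ae_restrict_mem measurableSet_Ioc] with t ht
    exact hm_nonneg t (Set.Ioc_subset_Icc_self ht)
  · exact Filter.Eventually.of_forall (fun t => abs_nonneg _)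
  -- FTC: compute ∫ m^p
  have hmb : (v - u) * b - (a * v - b * u) = v * (b - a) := by ring
  have hma : (v - u) * a - (a * v - b * u) = u * (b - a) := by ring
  have hAcalc : (∫ t in a..b, ((v - u) * t - (a * v - b * u)) ^ p)
      = (b - a) ^ (p + 1) * ((v ^ (p + 1) - u ^ (p + 1)) / ((p + 1) * (v - u))) := by
    have hderiv : ∀ t ∈ Set.uIcc a b,
        HasDerivAt (fun t => ((v - u) * t - (a * v - b * u)) ^ (p + 1) / ((p + 1) * (v - u)))
          (((v - u) * t - (a * v - b * u)) ^ p) t := by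
      intro t _
      have hbase : HasDerivAt (fun t : ℝ => (v - u) * t - (a * v - b * u)) (v - u) t := by
        simpa using ((hasDerivAt_id t).const_mul (v - u)).sub_const (a * v - b * u)
      have h2 := (Real.hasDerivAt_rpow_const
          (x := (v - u) * t - (a * v - b * u)) (p := p + 1)
          (Or.inr (by linarith))).comp t hbase
      have h2' : HasDerivAt (fun t => ((v - u) * t - (a * v - b * u)) ^ (p + 1))
          ((p + 1) * ((v - u) * t - (a * v - b * u)) ^ p * (v - u)) t := by
        simpa [Function.comp_def, add_sub_cancel_right] using h2
      have h3 := h2'.div_const ((p + 1) * (v - u))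
      refine h3.congr_deriv ?_
      rw [div_eq_iff (mul_pos (by linarith : (0:ℝ) < p + 1) hvu).ne']
      ring
    have hcont : Continuous (fun t : ℝ => ((v - u) * t - (a * v - b * u)) ^ p) :=
      hm_cont.rpow_const (fun t => Or.inr hp0.le)
    rw [integral_eq_sub_of_hasDerivAt hderiv (hcont.intervalIntegrable a b)]
    rw [hmb, hma, Real.mul_rpow (by linarith : (0:ℝ) ≤ v) hba.le,
      Real.mul_rpow hu.le hba.le]
    field_simp
  -- Jensen: ∫ |f'|^q ≤ (b-a) * |f'((a+b)/2)|^q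
  have hg_cont : Continuous (fun y : ℝ => |y| ^ q) :=
    continuous_abs.rpow_const (fun y => Or.inr hq0.le)
  have hg_aesm : AEStronglyMeasurable (fun t => |f' t| ^ q) (volume.restrict (Set.Ioc a b)) :=
    hg_cont.comp_aestronglyMeasurable hf'aesm
  have hg_int : IntegrableOn (fun t => |f' t| ^ q) (Set.Ioc a b) volume := by
    apply Integrable.mono' (integrable_const (2 * M ^ q)) hg_aesm
    filter_upwards [ae_restrict_mem measurableSet_Ioc] with t ht
    rw [Real.norm_eq_abs, abs_of_nonneg (Real.rpow_nonneg (abs_nonneg _) q)]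
    exact hgb t (hIoc_sub ht)
  have hgii : IntervalIntegrable (fun t => |f' t| ^ q) volume a b :=
    (intervalIntegrable_iff_integrableOn_Ioc_of_le hab).mpr hg_int
  have hgrefl : IntervalIntegrable (fun t => |f' (a + b - t)| ^ q) volume a b := by
    have := hgii.comp_sub_left (a + b)
    simpa using this.symm
  have hrefl_eq : (∫ t in a..b, |f' (a + b - t)| ^ q) = ∫ t in a..b, |f' t| ^ q := by
    have := intervalIntegral.integral_comp_sub_left (a := a) (b := b)
      (fun t => |f' t| ^ q) (a + b)
    simpa using this
  have hBcalc : (∫ t in a..b, |f' t| ^ q) ≤ (b - a) * |f' ((a + b) / 2)| ^ q := by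
    have hpt : ∀ t ∈ Set.Icc a b,
        |f' t| ^ q + |f' (a + b - t)| ^ q ≤ 2 * |f' ((a + b) / 2)| ^ q := by
      intro t ht
      have h := hconc t ⟨le_trans hua ht.1, le_trans ht.2 hbv⟩ (a + b - t)
        ⟨by linarith [ht.2], by linarith [ht.1]⟩ (1/2) ⟨by norm_num, by norm_num⟩
      have harg : (1/2 : ℝ) * t + (1 - 1/2) * (a + b - t) = (a + b) / 2 := by ring
      rw [harg] at h
      linarith
    have hmono := intervalIntegral.integral_mono_on hab (hgii.add hgrefl)
      (_root_.intervalIntegrable_const) hpt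
    rw [intervalIntegral.integral_add hgii hgrefl, hrefl_eq,
      intervalIntegral.integral_const, smul_eq_mul] at hmono
    linarith
  -- assembly
  set Kp : ℝ := (v ^ (p + 1) - u ^ (p + 1)) / ((p + 1) * (v - u)) with hKpdef
  set N : ℝ := |f' ((a + b) / 2)| with hNdef
  have hiA : (∫ t in Set.Ioc a b, ((v - u) * t - (a * v - b * u)) ^ p)
      = (b - a) ^ (p + 1) * Kp := by
    rw [← intervalIntegral.integral_of_le hab]; exact hAcalc
  have hiB : (∫ t in Set.Ioc a b, |f' t| ^ q) ≤ (b - a) * N ^ q := by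
    rw [← intervalIntegral.integral_of_le hab]; exact hBcalc
  have hiBnn : 0 ≤ ∫ t in Set.Ioc a b, |f' t| ^ q :=
    integral_nonneg (fun t => Real.rpow_nonneg (abs_nonneg _) q)
  have hexp : (p + 1) * (1 / p) + 1 / q = (2:ℝ) := by
    have h1 : (p + 1) * (1 / p) = 1 + 1 / p := by field_simp
    rw [h1]; linarith
  have hfinal : ((b - a) ^ (p + 1) * Kp) ^ (1 / p) * (((b - a) * N ^ q) ^ (1 / q))
      = Kp ^ (1 / p) * ((b - a) ^ 2 * N) := by
    rw [Real.mul_rpow (Real.rpow_nonneg hba.le _) hKnn,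
      Real.mul_rpow hba.le (Real.rpow_nonneg (abs_nonneg _) _),
      ← Real.rpow_mul hba.le, one_div q,
      Real.rpow_rpow_inv (abs_nonneg _) (ne_of_gt hq0)]
    rw [show (b - a) ^ ((p + 1) * (1 / p)) * Kp ^ (1 / p) * ((b - a) ^ (q⁻¹) * N)
        = Kp ^ (1 / p) * (((b - a) ^ ((p + 1) * (1 / p)) * (b - a) ^ (q⁻¹)) * N) by ring,
      ← Real.rpow_add hba]
    rw [show (p + 1) * (1 / p) + q⁻¹ = (2:ℝ) by rw [← one_div q]; exact hexp]
    rw [show ((2:ℝ)) = ((2:ℕ):ℝ) by norm_num, Real.rpow_natCast]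
  calc |∫ t in a..b, ((v - u) * t - (a * v - b * u)) * f' t|
      ≤ ∫ t in a..b, |((v - u) * t - (a * v - b * u)) * f' t| :=
        intervalIntegral.abs_integral_le_integral_abs hab
    _ = ∫ t in a..b, ((v - u) * t - (a * v - b * u)) * |f' t| := by
        apply intervalIntegral.integral_congr
        intro t ht
        rw [Set.uIcc_of_le hab] at ht
        show |((v - u) * t - (a * v - b * u)) * f' t| = _
        rw [abs_mul, abs_of_nonneg (hm_nonneg t ht)]
    _ = ∫ t in Set.Ioc a b, ((v - u) * t - (a * v - b * u)) * |f' t| :=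
        intervalIntegral.integral_of_le hab
    _ ≤ ((b - a) ^ (p + 1) * Kp) ^ (1 / p) * (((b - a) * N ^ q) ^ (1 / q)) := by
        refine le_trans hHolder ?_
        rw [hiA]
        exact mul_le_mul_of_nonneg_left
          (Real.rpow_le_rpow hiBnn hiB hiq.le)
          (Real.rpow_nonneg (mul_nonneg (Real.rpow_nonneg hba.le _) hKnn) _)
    _ = Kp ^ (1 / p) * ((b - a) ^ 2 * N) := hfinal

theorem stmt_17 (f f' : ℝ → ℝ) (u v p q : ℝ) (hu : 0 < u) (huv : u < v)
    (hq : 1 < q) (hpq : 1 / p + 1 / q = 1)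
    (hderiv : ∀ y ∈ interior (Set.Ici (0:ℝ)), HasDerivAt f (f' y) y)
    (hint : IntervalIntegrable f' MeasureTheory.volume u v)
    (hconc : ∀ a ∈ Set.Icc u v, ∀ b ∈ Set.Icc u v, ∀ t ∈ Set.Icc (0:ℝ) 1,
      t * |f' a| ^ q + (1 - t) * |f' b| ^ q ≤ |f' (t * a + (1 - t) * b)| ^ q)
    (x : ℝ) (hx : x ∈ Set.Icc u v) :
    |((v - x) * (v * f v - u * f x) + (x - u) * (v * f x - u * f u)) / (v - u) ^ 2
        - (1 / (v - u)) * ∫ μ in u..v, f μ|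
      ≤ (((v ^ (p + 1) - u ^ (p + 1)) / ((p + 1) * (v - u))) ^ (1 / p) / (v - u) ^ 2) *
          ((v - x) ^ 2 * |f' ((x + v) / 2)| + (x - u) ^ 2 * |f' ((x + u) / 2)|) := by
  obtain ⟨hux, hxv⟩ := hx
  have hvu : (0:ℝ) < v - u := by linarith
  have hIcc : ∀ y ∈ Set.Icc u v, HasDerivAt f (f' y) y := fun y hy =>
    hderiv y (by rw [interior_Ici]; exact lt_of_lt_of_le hu hy.1)
  have hf'int : ∀ a b : ℝ, u ≤ a → a ≤ b → b ≤ v →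
      IntervalIntegrable f' volume a b := fun a b h1 h2 h3 =>
    hint.mono_set (by
      rw [Set.uIcc_of_le h2, Set.uIcc_of_le (le_of_lt huv)]
      exact Set.Icc_subset_Icc h1 h3)
  -- integration by parts identity
  have parts : ∀ a b : ℝ, u ≤ a → a ≤ b → b ≤ v →
      (∫ t in a..b, ((v - u) * t - (a * v - b * u)) * f' t)
        = v * (b - a) * f b - u * (b - a) * f a - (v - u) * ∫ t in a..b, f t := by
    intro a b h1 h2 h3
    have hm : ∀ t ∈ Set.uIcc a b,
        HasDerivAt (fun t : ℝ => (v - u) * t - (a * v - b * u)) (v - u) t := by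
      intro t _
      simpa using ((hasDerivAt_id t).const_mul (v - u)).sub_const (a * v - b * u)
    have hf : ∀ t ∈ Set.uIcc a b, HasDerivAt f (f' t) t := by
      intro t ht
      rw [Set.uIcc_of_le h2] at ht
      exact hIcc t ⟨le_trans h1 ht.1, le_trans ht.2 h3⟩
    have h := intervalIntegral.integral_mul_deriv_eq_deriv_mul hm hf
      (intervalIntegrable_const) (hf'int a b h1 h2 h3)
    rw [h, intervalIntegral.integral_const_mul]
    ring
  -- splitting the integral of f
  have hfi1 : IntervalIntegrable f volume u x := by
    apply ContinuousOn.intervalIntegrable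
    intro t ht
    rw [Set.uIcc_of_le hux] at ht
    exact ((hIcc t ⟨ht.1, le_trans ht.2 hxv⟩).continuousAt).continuousWithinAt
  have hfi2 : IntervalIntegrable f volume x v := by
    apply ContinuousOn.intervalIntegrable
    intro t ht
    rw [Set.uIcc_of_le hxv] at ht
    exact ((hIcc t ⟨le_trans hux ht.1, ht.2⟩).continuousAt).continuousWithinAt
  have hsplit : (∫ t in u..x, f t) + (∫ t in x..v, f t) = ∫ t in u..v, f t :=
    intervalIntegral.integral_add_adjacent_intervals hfi1 hfi2
  have e1 := parts u x le_rfl hux hxv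
  have e2 := parts x v hux hxv le_rfl
  have hvu2 : (0:ℝ) < (v - u) ^ 2 := by positivity
  have hiden : ((v - x) * (v * f v - u * f x) + (x - u) * (v * f x - u * f u)) / (v - u) ^ 2
      - (1 / (v - u)) * ∫ μ in u..v, f μ
      = ((∫ t in u..x, ((v - u) * t - (u * v - x * u)) * f' t)
        + (∫ t in x..v, ((v - u) * t - (x * v - v * u)) * f' t)) / (v - u) ^ 2 := by
    rw [e1, e2, ← hsplit]
    field_simp
    ring
  rw [hiden, abs_div, abs_of_pos hvu2, div_le_iff₀ hvu2]
  have k1 := key_bound f' u v p q u x hu huv hq hpq hconc hint le_rfl hux hxv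
  have k2 := key_bound f' u v p q x v hu huv hq hpq hconc hint hux hxv le_rfl
  calc |(∫ t in u..x, ((v - u) * t - (u * v - x * u)) * f' t)
        + (∫ t in x..v, ((v - u) * t - (x * v - v * u)) * f' t)|
      ≤ |∫ t in u..x, ((v - u) * t - (u * v - x * u)) * f' t|
        + |∫ t in x..v, ((v - u) * t - (x * v - v * u)) * f' t| := abs_add_le _ _
    _ ≤ ((v ^ (p + 1) - u ^ (p + 1)) / ((p + 1) * (v - u))) ^ (1 / p) *
          ((x - u) ^ 2 * |f' ((u + x) / 2)|)
        + ((v ^ (p + 1) - u ^ (p + 1)) / ((p + 1) * (v - u))) ^ (1 / p) *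
          ((v - x) ^ 2 * |f' ((x + v) / 2)|) := add_le_add k1 k2
    _ = ((v ^ (p + 1) - u ^ (p + 1)) / ((p + 1) * (v - u))) ^ (1 / p) / (v - u) ^ 2 *
          ((v - x) ^ 2 * |f' ((x + v) / 2)| + (x - u) ^ 2 * |f' ((x + u) / 2)|) *
        (v - u) ^ 2 := by
        rw [show (u + x) / 2 = (x + u) / 2 by ring]
        field_simp
        ring
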